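/- Let T be a tree in the family T_Δ with underlying subtrees T_1, …, T_k whose central vertices are v_1, …, v_k. If S is obtained from the vertex set of T by removing, for each i, exactly one leaf neighbor in T of the central vertex v_i, then S is a minimum total forcing set of T; in particular |S| = F_t(T). -/
import Mathlib

/-! Basic definitions: (zero) forcing, total forcing, forcing numbers. -/

namespace TotalForcing

variable {V : Type*}

/-- The set of vertices eventually colored by the forcing process starting from `S`:
a vertex is colored if it is in `S`, or if some colored vertex `u` is adjacent to it
while all other neighbors of `u` are already colored (so `v` is the unique
non-colored neighbor of `u`, and `u` forces `v`). -/
inductive Forces (G : SimpleGraph V) (S : Set V) : V → Prop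
  | mem : ∀ {v : V}, v ∈ S → Forces G S v
  | force : ∀ {u v : V}, G.Adj u v → Forces G S u →
      (∀ w, G.Adj u w → w ≠ v → Forces G S w) → Forces G S v

/-- `S` is a forcing set of `G` if the forcing process colors every vertex. -/
def IsForcingSet (G : SimpleGraph V) (S : Set V) : Prop := ∀ v : V, Forces G S v

/-- A total forcing set is a forcing set inducing a subgraph without isolated vertices. -/
def IsTotalForcingSet (G : SimpleGraph V) (S : Set V) : Prop :=
  IsForcingSet G S ∧ ∀ v ∈ S, ∃ u ∈ S, G.Adj v u

/-- The forcing number `F(G)`. -/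
noncomputable def forcingNumber (G : SimpleGraph V) [Fintype V] : ℕ :=
  sInf {n : ℕ | ∃ S : Finset V, S.card = n ∧ IsForcingSet G ↑S}

/-- The total forcing number `F_t(G)`. -/
noncomputable def totalForcingNumber (G : SimpleGraph V) [Fintype V] : ℕ :=
  sInf {n : ℕ | ∃ S : Finset V, S.card = n ∧ IsTotalForcingSet G ↑S}

/-- A leaf is a vertex of degree 1. -/
def IsLeaf (G : SimpleGraph V) (v : V) : Prop := (G.neighborSet v).ncard = 1

/-- The number of leaves of `G`. -/
noncomputable def numLeaves (G : SimpleGraph V) : ℕ := {v : V | IsLeaf G v}.ncard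

/-- A strong support vertex is a vertex with at least two leaf neighbors. -/
def IsStrongSupport (G : SimpleGraph V) (v : V) : Prop :=
  ∃ x y : V, x ≠ y ∧ G.Adj v x ∧ G.Adj v y ∧ IsLeaf G x ∧ IsLeaf G y

end TotalForcing

namespace TotalForcing

/-- The vertex set of `T` is partitioned into `P 0, …, P (k-1)`; the subgraph of `T`
induced by `P i` is a star with central vertex `c i`, isomorphic to `K_{1,Δ}` for `i = 0`
and to `K_{1,Δ-1}` otherwise; each `c i` is a strong support vertex of degree `Δ` in `T`;
and the central vertices form an independent set in `T`. -/
def IsTStructure {V : Type*} [Fintype V] (T : SimpleGraph V) [DecidableRel T.Adj]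
    {k : ℕ} (Δ : ℕ) (P : Fin k → Finset V) (c : Fin k → V) : Prop :=
  (∀ x : V, ∃! i : Fin k, x ∈ P i) ∧
  (∀ i, c i ∈ P i) ∧
  (∀ i : Fin k, (P i).card = if (i : ℕ) = 0 then Δ + 1 else Δ) ∧
  (∀ i, ∀ x ∈ P i, x ≠ c i → T.Adj (c i) x) ∧
  (∀ i, ∀ x ∈ P i, ∀ y ∈ P i, x ≠ c i → y ≠ c i → ¬ T.Adj x y) ∧
  (∀ i, T.degree (c i) = Δ) ∧
  (∀ i, IsStrongSupport T (c i)) ∧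
  (∀ i j, ¬ T.Adj (c i) (c j))

/-- Membership in the family `𝒯_Δ`. -/
def InFamilyT {V : Type*} [Fintype V] (T : SimpleGraph V) [DecidableRel T.Adj]
    (Δ : ℕ) : Prop :=
  T.maxDegree = Δ ∧
    ∃ (k : ℕ), 0 < k ∧ ∃ (P : Fin k → Finset V) (c : Fin k → V), IsTStructure T Δ P c

end TotalForcing

namespace TotalForcing

variable {V : Type*}

/-! ### Auxiliary machinery: iterated forcing and ranks -/

/-- The set of vertices colored after `n` rounds of forcing. -/
def FIter (G : SimpleGraph V) (S : Set V) : ℕ → Set V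
  | 0 => S
  | n+1 => FIter G S n ∪
      {v | ∃ u, G.Adj u v ∧ u ∈ FIter G S n ∧ ∀ w, G.Adj u w → w ≠ v → w ∈ FIter G S n}

lemma FIter_mono (G : SimpleGraph V) (S : Set V) {m n : ℕ} (h : m ≤ n) :
    FIter G S m ⊆ FIter G S n := by
  induction n with
  | zero => simp_all
  | succ n ih =>
    rcases Nat.lt_or_ge m (n+1) with h' | h'
    · exact (ih (Nat.lt_succ_iff.mp h')).trans Set.subset_union_left
    · have : m = n + 1 := le_antisymm h h'
      subst this; exact subset_rfl

/-- The first round at which a vertex gets colored. -/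
noncomputable def rank (G : SimpleGraph V) (S : Set V) (v : V) : ℕ :=
  sInf {n | v ∈ FIter G S n}

lemma mem_fiter_rank {G : SimpleGraph V} {S : Set V} {v : V}
    (h : ∃ n, v ∈ FIter G S n) : v ∈ FIter G S (rank G S v) :=
  Nat.sInf_mem h

lemma rank_le {G : SimpleGraph V} {S : Set V} {v : V} {n : ℕ}
    (h : v ∈ FIter G S n) : rank G S v ≤ n :=
  Nat.sInf_le h

lemma forces_fiter [Fintype V] {G : SimpleGraph V} {S : Set V} {v : V}
    (h : Forces G S v) : ∃ n, v ∈ FIter G S n := by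
  induction h with
  | mem h => exact ⟨0, h⟩
  | @force u v hadj hu hw ihu ihw =>
    classical
    set N : ℕ := Finset.univ.sup (rank G S) with hN
    refine ⟨N + 1, Or.inr ⟨u, hadj, ?_, ?_⟩⟩
    · exact FIter_mono G S (Finset.le_sup (Finset.mem_univ u)) (mem_fiter_rank ihu)
    · intro w hadjw hne
      exact FIter_mono G S (Finset.le_sup (Finset.mem_univ w))
        (mem_fiter_rank (ihw w hadjw hne))

/-- For a vertex outside `S` that is forced, there is a forcer `u` all of whose
other neighbors have strictly smaller rank. -/
lemma exists_good_forcer [Fintype V] {G : SimpleGraph V} {S : Set V} {v : V}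
    (hf : Forces G S v) (hv : v ∉ S) :
    ∃ u, G.Adj u v ∧ ∀ w, G.Adj u w → w ≠ v → rank G S w < rank G S v := by
  have hex := forces_fiter hf
  have hmem := mem_fiter_rank hex
  have hr0 : rank G S v ≠ 0 := by
    intro h0
    rw [h0] at hmem
    exact hv hmem
  obtain ⟨r', hr'⟩ := Nat.exists_eq_succ_of_ne_zero hr0
  rw [hr'] at hmem
  rcases hmem with h | ⟨u, hadj, hu, hws⟩
  · have := rank_le h
    omega
  · refine ⟨u, hadj, fun w hadjw hne => ?_⟩
    have := rank_le (hws w hadjw hne)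
    omega

/-- A leaf has a unique neighbor. -/
lemma leaf_unique_nbr {T : SimpleGraph V} {x u w : V} (hx : IsLeaf T x)
    (hu : T.Adj x u) (hw : T.Adj x w) : w = u := by
  obtain ⟨a, ha⟩ := Set.ncard_eq_one.mp hx
  have h1 : u ∈ T.neighborSet x := hu
  have h2 : w ∈ T.neighborSet x := hw
  rw [ha, Set.mem_singleton_iff] at h1 h2
  rw [h1, h2]

lemma ncard_neighborSet_eq_degree [Fintype V] (T : SimpleGraph V) [DecidableRel T.Adj]
    (v : V) : (T.neighborSet v).ncard = T.degree v := by
  rw [Set.ncard_eq_toFinset_card']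
  rfl

open Finset in
/-- Counting argument: in a tree whose `k` "centers" are independent, each of degree `Δ`,
with `k·Δ + 1` vertices in total, every edge is incident with a center. -/
lemma no_edge_between_noncenters [Fintype V] [DecidableEq V] (T : SimpleGraph V)
    [DecidableRel T.Adj] (hT : T.IsTree) {k Δ : ℕ} (c : Fin k → V)
    (hc_inj : Function.Injective c)
    (hdeg : ∀ i, T.degree (c i) = Δ)
    (hindep : ∀ i j, ¬ T.Adj (c i) (c j))
    (hcardV : Fintype.card V = k * Δ + 1) :
    ∀ x y, T.Adj x y → (∃ i, x = c i) ∨ (∃ i, y = c i) := by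
  set C : Finset V := Finset.image c Finset.univ with hC
  have hCcard : C.card = k := by
    rw [hC, Finset.card_image_of_injective _ hc_inj, Finset.card_univ, Fintype.card_fin]
  have hedges : T.edgeFinset.card + 1 = Fintype.card V := hT.card_edgeFinset
  have htot : ∑ v, T.degree v = 2 * (k * Δ) := by
    rw [SimpleGraph.sum_degrees_eq_twice_card_edges]
    omega
  have hA : ∑ v ∈ C, T.degree v = k * Δ := by
    rw [hC, Finset.sum_image (fun i _ j _ h => hc_inj h)]
    simp [hdeg, Finset.sum_const, Finset.card_univ, mul_comm]
  have hB : ∑ v ∈ Cᶜ, T.degree v = k * Δ := by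
    have := Finset.sum_add_sum_compl C (fun v => T.degree v)
    rw [htot] at this
    omega
  have hsplit : ∀ v : V, T.degree v
      = (C.filter (T.Adj v)).card + (Cᶜ.filter (T.Adj v)).card := by
    intro v
    rw [SimpleGraph.degree, SimpleGraph.neighborFinset_eq_filter]
    rw [← Finset.union_compl C, Finset.filter_union]
    exact Finset.card_union_of_disjoint
      (Finset.disjoint_filter_filter disjoint_compl_right)
  have hcc : ∀ v ∈ C, C.filter (T.Adj v) = ∅ := by
    intro v hv
    rw [Finset.eq_empty_iff_forall_notMem]
    intro u hu
    rw [Finset.mem_filter] at hu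
    obtain ⟨j, _, rfl⟩ := Finset.mem_image.mp hu.1
    obtain ⟨i, _, rfl⟩ := Finset.mem_image.mp hv
    exact hindep i j hu.2
  have hAcc : ∑ v ∈ C, (Cᶜ.filter (T.Adj v)).card = k * Δ := by
    calc ∑ v ∈ C, (Cᶜ.filter (T.Adj v)).card
        = ∑ v ∈ C, T.degree v := by
          refine Finset.sum_congr rfl fun v hv => ?_
          rw [hsplit v, hcc v hv]; simp
      _ = k * Δ := hA
  have hswap : ∑ v ∈ C, (Cᶜ.filter (T.Adj v)).card
      = ∑ u ∈ Cᶜ, (C.filter (T.Adj u)).card := by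
    simp only [Finset.card_filter]
    rw [Finset.sum_comm]
    refine Finset.sum_congr rfl fun u _ => Finset.sum_congr rfl fun v _ => ?_
    simp [SimpleGraph.adj_comm]
  have hzero : ∑ u ∈ Cᶜ, (Cᶜ.filter (T.Adj u)).card = 0 := by
    have hB' : ∑ u ∈ Cᶜ, ((C.filter (T.Adj u)).card + (Cᶜ.filter (T.Adj u)).card)
        = k * Δ := by
      rw [← Finset.sum_congr rfl fun u _ => hsplit u]; exact hB
    rw [Finset.sum_add_distrib] at hB'
    omega
  intro x y hxy
  by_contra hcon
  push_neg at hcon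
  obtain ⟨hx, hy⟩ := hcon
  have hxC : x ∈ Cᶜ := by
    simp only [Finset.mem_compl, hC, Finset.mem_image]
    rintro ⟨i, -, rfl⟩
    exact hx i rfl
  have hyC : y ∈ Cᶜ.filter (T.Adj x) := by
    refine Finset.mem_filter.mpr ⟨?_, hxy⟩
    simp only [Finset.mem_compl, hC, Finset.mem_image]
    rintro ⟨i, -, rfl⟩
    exact hy i rfl
  have hne : (Cᶜ.filter (T.Adj x)).card ≠ 0 := by
    simp only [ne_eq, Finset.card_eq_zero]
    exact fun h => by simp [h] at hyC
  have hle : (Cᶜ.filter (T.Adj x)).card ≤ ∑ u ∈ Cᶜ, (Cᶜ.filter (T.Adj u)).card :=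
    Finset.single_le_sum (f := fun u => (Cᶜ.filter (T.Adj u)).card)
      (fun _ _ => Nat.zero_le _) hxC
  omega

/-- Lower bound: any total forcing set misses at most `k` vertices. -/
lemma lower_bound [Fintype V] [DecidableEq V] (T : SimpleGraph V) [DecidableRel T.Adj]
    {k : ℕ} (c : Fin k → V)
    (hedge : ∀ x y, T.Adj x y → (∃ i, x = c i) ∨ (∃ i, y = c i))
    (hsupp : ∀ i, IsStrongSupport T (c i))
    (S' : Finset V) (h : IsTotalForcingSet T ↑S') :
    Fintype.card V - k ≤ S'.card := by
  classical
  obtain ⟨hforce, htotal⟩ := h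
  have hcS : ∀ i, c i ∈ S' := by
    intro i
    by_contra hci
    obtain ⟨x, y, hxy, hax, hay, hlx, hly⟩ := hsupp i
    have hxS : x ∉ S' := by
      intro hx
      obtain ⟨u, huS, hadjxu⟩ := htotal x (by simpa using hx)
      have : c i = u := leaf_unique_nbr hlx hadjxu hax.symm
      rw [this] at hci
      exact hci (by simpa using huS)
    have hyS : y ∉ S' := by
      intro hy
      obtain ⟨u, huS, hadjyu⟩ := htotal y (by simpa using hy)
      have : c i = u := leaf_unique_nbr hly hadjyu hay.symm
      rw [this] at hci
      exact hci (by simpa using huS)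
    obtain ⟨u1, hu1adj, hu1⟩ := exists_good_forcer (hforce x) (by simpa using hxS)
    obtain ⟨u2, hu2adj, hu2⟩ := exists_good_forcer (hforce y) (by simpa using hyS)
    have e1 : c i = u1 := leaf_unique_nbr hlx hu1adj.symm hax.symm
    have e2 : c i = u2 := leaf_unique_nbr hly hu2adj.symm hay.symm
    subst e1; subst e2
    have h1 := hu1 y hay (Ne.symm hxy)
    have h2 := hu2 x hax hxy
    omega
  have key : ∀ x ∈ S'ᶜ, ∃ j : Fin k, T.Adj (c j) x ∧
      ∀ w, T.Adj (c j) w → w ≠ x → rank T ↑S' w < rank T ↑S' x := by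
    intro x hx
    have hxS : x ∉ S' := Finset.mem_compl.mp hx
    obtain ⟨u, huadj, hu⟩ := exists_good_forcer (hforce x) (by simpa using hxS)
    rcases hedge u x huadj with ⟨j, rfl⟩ | ⟨j, hj⟩
    · exact ⟨j, huadj, hu⟩
    · exact absurd (hj ▸ hcS j) hxS
  set φ : V → ℕ := fun x =>
    if hx : ∃ j : Fin k, T.Adj (c j) x ∧
        ∀ w, T.Adj (c j) w → w ≠ x → rank T ↑S' w < rank T ↑S' x
    then (hx.choose : ℕ) else 0 with hφ
  have hmaps : ∀ x ∈ S'ᶜ, φ x ∈ Finset.range k := by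
    intro x hx
    have hex := key x hx
    rw [hφ]
    simp only [dif_pos hex]
    exact Finset.mem_range.mpr hex.choose.isLt
  have hinj : Set.InjOn φ ↑(S'ᶜ) := by
    intro x hx y hy hxy
    by_contra hne
    have hex := key x (by simpa using hx)
    have hey := key y (by simpa using hy)
    rw [hφ] at hxy
    simp only [dif_pos hex, dif_pos hey] at hxy
    have hj : hex.choose = hey.choose := Fin.val_injective hxy
    obtain ⟨hadjx, hrx⟩ := hex.choose_spec
    obtain ⟨hadjy, hry⟩ := hey.choose_spec
    rw [← hj] at hadjy hry
    have h1 := hrx y hadjy (Ne.symm hne)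
    have h2 := hry x hadjx hne
    omega
  have hcard : (S'ᶜ : Finset V).card ≤ k := by
    have := Finset.card_le_card_of_injOn φ hmaps hinj
    simpa using this
  have h1 : (S'ᶜ : Finset V).card = Fintype.card V - S'.card := Finset.card_compl S'
  have h2 : S'.card ≤ Fintype.card V := Finset.card_le_univ S'
  omega

end TotalForcing

namespace TotalForcing

/-- Let `T ∈ 𝒯_Δ` with underlying subtrees induced by `P 0, …, P (k-1)`
and central vertices `c 0, …, c (k-1)`. If `S` is obtained from `V(T)` by removing, for
each `i`, exactly one leaf neighbor `ℓ i` (in `T`) of the central vertex `c i`, then `S`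
is a minimum total forcing set of `T`; in particular `|S| = F_t(T)`. -/
theorem stmt5 {V : Type*} [Fintype V] [DecidableEq V] (T : SimpleGraph V)
    [DecidableRel T.Adj] (Δ k : ℕ) (hk : 0 < k)
    (P : Fin k → Finset V) (c : Fin k → V)
    (hT : T.IsTree) (hmax : T.maxDegree = Δ) (hstruct : IsTStructure T Δ P c)
    (ℓ : Fin k → V) (hleaf : ∀ i, IsLeaf T (ℓ i)) (hadj : ∀ i, T.Adj (c i) (ℓ i)) :
    IsTotalForcingSet T
        ((Finset.univ \ Finset.image ℓ Finset.univ : Finset V) : Set V) ∧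
      (Finset.univ \ Finset.image ℓ Finset.univ : Finset V).card =
        totalForcingNumber T := by
  classical
  obtain ⟨hpart, hcP, hcardP, hstar, hnostar, hdeg, hsupp, hindep⟩ := hstruct
  set S₀ : Finset V := Finset.univ \ Finset.image ℓ Finset.univ with hS₀
  -- basic facts
  have hmemu : ∀ x (i j : Fin k), x ∈ P i → x ∈ P j → i = j := by
    intro x i j hi hj
    obtain ⟨i₀, hi₀, huniq⟩ := hpart x
    rw [huniq i hi, huniq j hj]
  have hc_inj : Function.Injective c := by
    intro i j hij
    exact hmemu (c i) i j (hcP i) (hij ▸ hcP j)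
  have hΔ2 : 2 ≤ Δ := by
    obtain ⟨x, y, hxy, hax, hay, -, -⟩ := hsupp ⟨0, hk⟩
    have hsub : ({x, y} : Finset V) ⊆ T.neighborFinset (c ⟨0, hk⟩) := by
      intro z hz
      rcases Finset.mem_insert.mp hz with rfl | hz
      · exact (SimpleGraph.mem_neighborFinset _ _ _).mpr hax
      · rw [Finset.mem_singleton] at hz
        exact hz ▸ (SimpleGraph.mem_neighborFinset _ _ _).mpr hay
    have h2 : 2 ≤ T.degree (c ⟨0, hk⟩) := by
      have := Finset.card_le_card hsub
      rwa [Finset.card_insert_of_notMem (by simpa using hxy), Finset.card_singleton] at this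
    rwa [hdeg] at h2
  have hcnl : ∀ i, ¬ IsLeaf T (c i) := by
    intro i hl
    rw [IsLeaf, ncard_neighborSet_eq_degree, hdeg i] at hl
    omega
  have hlc : ∀ i j, ℓ i ≠ c j := fun i j h => hcnl j (h ▸ hleaf i)
  -- the only neighbor of ℓ i is c i
  have hlnbr : ∀ i w, T.Adj (ℓ i) w → w = c i :=
    fun i w hw => leaf_unique_nbr (hleaf i) (hadj i).symm hw
  have hl_inj : Function.Injective ℓ := by
    intro i j hij
    have : c j = c i := hlnbr i (c j) (hij ▸ (hadj j).symm)
    exact hc_inj this.symm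
  have hmemS₀ : ∀ x : V, x ∈ S₀ ↔ ∀ j, x ≠ ℓ j := by
    intro x
    rw [hS₀, Finset.mem_sdiff]
    constructor
    · intro h j e
      exact h.2 (Finset.mem_image.mpr ⟨j, Finset.mem_univ j, e.symm⟩)
    · intro h
      refine ⟨Finset.mem_univ x, fun hx => ?_⟩
      obtain ⟨j, -, hj⟩ := Finset.mem_image.mp hx
      exact h j hj.symm
  have hcS₀ : ∀ i, c i ∈ S₀ := fun i => (hmemS₀ (c i)).mpr fun j h => hlc j i h.symm
  -- Part A : total forcing set
  have hTFS : IsTotalForcingSet T ↑S₀ := by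
    constructor
    · intro v
      by_cases hv : ∃ i, v = ℓ i
      · obtain ⟨i, rfl⟩ := hv
        refine Forces.force (hadj i) (Forces.mem (by simpa using hcS₀ i)) ?_
        intro w hw hne
        have hwS : w ∈ S₀ := by
          rw [hmemS₀ w]
          intro j hj
          subst hj
          have hcc : c i = c j := hlnbr j (c i) hw.symm
          exact hne (by rw [hc_inj hcc])
        exact Forces.mem (by simpa using hwS)
      · push_neg at hv
        exact Forces.mem (by simp only [Finset.mem_coe]; exact (hmemS₀ v).mpr hv)
    · intro v hv
      obtain ⟨i, hvP, -⟩ := hpart v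
      by_cases hvc : v = c i
      · obtain ⟨x, y, hxy, hax, hay, hlx, hly⟩ := hsupp i
        have hxa : ∀ j, x = ℓ j → j = i := by
          intro j hx
          subst hx
          exact (hc_inj (hlnbr j (c i) hax.symm)).symm
        have hya : ∀ j, y = ℓ j → j = i := by
          intro j hy
          subst hy
          exact (hc_inj (hlnbr j (c i) hay.symm)).symm
        by_cases hxl : x = ℓ i
        · refine ⟨y, ?_, hvc ▸ hay⟩
          simp only [Finset.mem_coe]
          rw [hmemS₀ y]
          intro j hj
          have := hya j hj
          subst this
          exact hxy (hxl.trans hj.symm)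
        · refine ⟨x, ?_, hvc ▸ hax⟩
          simp only [Finset.mem_coe]
          rw [hmemS₀ x]
          intro j hj
          have := hxa j hj
          subst this
          exact hxl hj
      · exact ⟨c i, by simpa using hcS₀ i, (hstar i v hvP hvc).symm⟩
  refine ⟨hTFS, ?_⟩
  -- cardinalities
  have hdisj : ∀ (i : Fin k), i ∈ Finset.univ → ∀ (j : Fin k), j ∈ Finset.univ →
      i ≠ j → Disjoint (P i) (P j) := by
    intro i _ j _ hij
    rw [Finset.disjoint_left]
    intro x hxi hxj
    exact hij (hmemu x i j hxi hxj)
  have hcardV : Fintype.card V = k * Δ + 1 := by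
    have huniv : (Finset.univ : Finset V) = Finset.univ.biUnion P := by
      ext x
      simp only [Finset.mem_univ, true_iff, Finset.mem_biUnion]
      obtain ⟨i, hi, -⟩ := hpart x
      exact ⟨i, trivial, hi⟩
    have h1 : Fintype.card V = ∑ i : Fin k, (P i).card := by
      rw [← Finset.card_univ, huniv, Finset.card_biUnion hdisj]
    rw [h1]
    have h2 : ∀ i : Fin k, (P i).card = Δ + (if i = (⟨0, hk⟩ : Fin k) then 1 else 0) := by
      intro i
      rw [hcardP i]
      by_cases h : (i : ℕ) = 0
      · have : i = (⟨0, hk⟩ : Fin k) := Fin.ext h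
        simp [h, this]
      · have : i ≠ (⟨0, hk⟩ : Fin k) := fun e => h (by rw [e])
        simp [h, this]
    rw [Finset.sum_congr rfl fun i _ => h2 i, Finset.sum_add_distrib]
    simp [Finset.sum_ite_eq', mul_comm]
  have hcardS₀ : S₀.card = Fintype.card V - k := by
    rw [hS₀, Finset.card_sdiff_of_subset (Finset.subset_univ _), Finset.card_univ,
      Finset.card_image_of_injective _ hl_inj, Finset.card_univ, Fintype.card_fin]
  -- lower bound
  have hedge := no_edge_between_noncenters T hT c hc_inj hdeg hindep hcardV
  have hlow : ∀ S' : Finset V, IsTotalForcingSet T ↑S' → S₀.card ≤ S'.card := by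
    intro S' hS'
    rw [hcardS₀]
    exact lower_bound T c hedge hsupp S' hS'
  -- conclude
  refine le_antisymm ?_ (Nat.sInf_le ⟨S₀, rfl, hTFS⟩)
  refine le_csInf ⟨S₀.card, S₀, rfl, hTFS⟩ ?_
  rintro n ⟨S', rfl, hS'⟩
  exact hlow S' hS'

end TotalForcing
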